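/- Let k > 0, c ∈ ℝ, m a positive natural number, and ν > (m−1)k. Then for all x > 0, the m-th derivative of the generalized k-Bessel function satisfies d^m/dx^m W^k_{ν,c}(x) = (1/(2^m k^m)) Σ_{n=0}^m (−1)^n · binom(m,n) · c^n k^n · W^k_{ν − mk + 2nk, c}(x). -/

import Mathlib

set_option maxHeartbeats 1000000

open Real Filter

/-- The k-gamma function, `Γ_k(x) = k^(x/k - 1) * Γ(x/k)`. -/
noncomputable def kGamma (k x : ℝ) : ℝ := k ^ (x / k - 1) * Real.Gamma (x / k)

/-- The generalized k-Bessel function `W^k_{ν,c}(x)`. -/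
noncomputable def kBesselW (k ν c x : ℝ) : ℝ :=
  ∑' r : ℕ, (-c) ^ r / (kGamma k (r * k + ν + k) * (r.factorial : ℝ)) *
    (x / 2) ^ (2 * (r : ℝ) + ν / k)

lemma kGamma_pos {k x : ℝ} (hk : 0 < k) (hx : 0 < x) : 0 < kGamma k x := by
  unfold kGamma
  exact mul_pos (rpow_pos_of_pos hk _) (Gamma_pos_of_pos (div_pos hx hk))

lemma kGamma_add {k x : ℝ} (hk : 0 < k) (hx : x ≠ 0) :
    kGamma k (x + k) = x * kGamma k x := by
  unfold kGamma
  have hk' : k ≠ 0 := hk.ne'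
  have h1 : (x + k) / k = x / k + 1 := by field_simp
  rw [h1, Real.Gamma_add_one (div_ne_zero hx hk'), add_sub_cancel_right,
    Real.rpow_sub hk, rpow_one]
  field_simp

lemma summable_master {k ν C t B : ℝ} (hk : 0 < k) (hν : -k < ν) (hC : 0 < C)
    (ht : 0 < t) (hB : 0 ≤ B) :
    Summable (fun r : ℕ =>
      C ^ r / (kGamma k (r * k + ν + k) * (r.factorial : ℝ)) * ((2 * r + B + 1) * t ^ r)) := by
  set f : ℕ → ℝ := fun r =>
    C ^ r / (kGamma k (r * k + ν + k) * (r.factorial : ℝ)) * ((2 * r + B + 1) * t ^ r) with hf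
  have hνk : 0 < ν + k := by linarith
  have harg : ∀ r : ℕ, 0 < (r : ℝ) * k + ν + k := fun r => by
    have : 0 ≤ (r : ℝ) * k := by positivity
    linarith
  have hG : ∀ r : ℕ, 0 < kGamma k ((r : ℝ) * k + ν + k) := fun r => kGamma_pos hk (harg r)
  have hb : ∀ r : ℕ, (0:ℝ) < 2 * r + B + 1 := fun r => by
    have : (0:ℝ) ≤ (r:ℝ) := Nat.cast_nonneg r
    linarith
  have hpos : ∀ r : ℕ, 0 < f r := fun r => by
    have h1 := hG r
    have h2 : (0:ℝ) < (r.factorial : ℝ) := by positivity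
    exact mul_pos (div_pos (pow_pos hC r) (mul_pos h1 h2)) (mul_pos (hb r) (pow_pos ht r))
  have key : ∀ r : ℕ, f (r + 1) / f r
      = C * t * (2 * r + B + 3) / ((2 * r + B + 1) * ((r : ℝ) + 1) * ((r : ℝ) * k + ν + k)) := by
    intro r
    rw [div_eq_iff (hpos r).ne']
    have h1 : ((r:ℕ)+1 : ℝ) * k + ν + k = ((r : ℝ) * k + ν + k) + k := by push_cast; ring
    have h2 : kGamma k ((((r:ℕ):ℝ)+1) * k + ν + k)
        = ((r : ℝ) * k + ν + k) * kGamma k ((r : ℝ) * k + ν + k) := by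
      rw [show (((r:ℕ):ℝ)+1) * k + ν + k = ((r : ℝ) * k + ν + k) + k by ring,
        kGamma_add hk (harg r).ne']
    simp only [hf]
    push_cast [Nat.factorial_succ]
    rw [h2]
    have hGr := (hG r).ne'
    have hfr : ((r.factorial : ℝ)) ≠ 0 := by positivity
    have hr1 : ((r:ℝ)+1) ≠ 0 := by positivity
    have hbr := (hb r).ne'
    have har := (harg r).ne'
    field_simp
    ring
  apply summable_of_ratio_test_tendsto_lt_one (l := 0) one_pos
    (Eventually.of_forall fun r => (hpos r).ne')
  have hnorm : (fun r : ℕ => ‖f (r+1)‖ / ‖f r‖)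
      = fun r : ℕ => C * t * (2 * r + B + 3) / ((2 * r + B + 1) * ((r : ℝ) + 1) * ((r : ℝ) * k + ν + k)) := by
    ext r
    rw [Real.norm_of_nonneg (hpos _).le, Real.norm_of_nonneg (hpos _).le, key r]
  rw [hnorm]
  apply squeeze_zero (g := fun r : ℕ => (3 * (C * t) / (ν + k)) * (1 / ((r:ℝ) + 1)))
    (fun r => by
      have := hb r; have := harg r
      positivity)
  · intro r
    have hgr : (3 * (C * t) / (ν + k)) * (1 / ((r:ℝ) + 1))
        = 3 * (C * t) / ((ν + k) * ((r:ℝ) + 1)) := by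
      rw [div_mul_div_comm, mul_one]
    rw [hgr, div_le_div_iff₀ (by
        exact mul_pos (mul_pos (hb r) (by positivity)) (harg r)) (by positivity)]
    have h3 : 2 * (r:ℝ) + B + 3 ≤ 3 * (2 * r + B + 1) := by
      have := hb r; linarith
    have h4 : ν + k ≤ (r:ℝ)*k + ν + k := by
      have : (0:ℝ) ≤ (r:ℝ) * k := by positivity
      linarith
    calc C*t*(2*r+B+3) * ((ν+k)*((r:ℝ)+1))
        ≤ C*t*(3*(2*r+B+1)) * (((r:ℝ)*k+ν+k)*((r:ℝ)+1)) := by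
          apply mul_le_mul (by apply mul_le_mul_of_nonneg_left h3; positivity)
            (by apply mul_le_mul_of_nonneg_right h4; positivity)
            (by positivity)
            (by
              have := hb r
              positivity)
      _ = 3*(C*t)*((2*r+B+1)*((r:ℝ)+1)*((r:ℝ)*k+ν+k)) := by ring
  · have h := tendsto_one_div_add_atTop_nhds_zero_nat (𝕜 := ℝ)
    simpa using h.const_mul (3 * (C * t) / (ν + k))

lemma rpow_split {y : ℝ} (hy : 0 < y) (r : ℕ) (e : ℝ) :
    y ^ (2 * (r : ℝ) + e) = (y ^ 2) ^ r * y ^ e := by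
  rw [rpow_add hy, show (2:ℝ) * (r:ℝ) = ((2*r : ℕ):ℝ) by push_cast; ring,
    rpow_natCast, pow_mul]

lemma rpow_bound {lo hi y e : ℝ} (hlo : 0 < lo) (h1 : lo ≤ y) (h2 : y ≤ hi) :
    y ^ e ≤ lo ^ e + hi ^ e := by
  rcases le_or_gt 0 e with he | he
  · have h : y ^ e ≤ hi ^ e := rpow_le_rpow (hlo.trans_le h1).le h2 he
    have h0 : 0 ≤ lo ^ e := (rpow_pos_of_pos hlo e).le
    linarith
  · have h : y ^ e ≤ lo ^ e := rpow_le_rpow_of_nonpos hlo h1 he.le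
    have h0 : 0 ≤ hi ^ e := rpow_nonneg (hlo.trans_le (h1.trans h2)).le e
    linarith

lemma summable_term {k ν c x : ℝ} (hk : 0 < k) (hν : -k < ν) (hx : 0 < x) :
    Summable (fun r : ℕ =>
      (-c) ^ r / (kGamma k (r * k + ν + k) * (r.factorial : ℝ)) *
        (x / 2) ^ (2 * (r : ℝ) + ν / k)) := by
  have hx2 : (0:ℝ) < x / 2 := by linarith
  have harg : ∀ r : ℕ, 0 < (r : ℝ) * k + ν + k := fun r => by
    have : 0 ≤ (r : ℝ) * k := by positivity
    linarith
  have hG : ∀ r : ℕ, 0 < kGamma k ((r : ℝ) * k + ν + k) := fun r => kGamma_pos hk (harg r)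
  apply Summable.of_norm_bounded
    ((summable_master hk hν (C := |c| + 1) (t := (x/2)^2) (B := 0)
      (by positivity) (by positivity) le_rfl).mul_right ((x/2) ^ (ν/k)))
  intro r
  have hGf : (0:ℝ) < kGamma k ((r : ℝ) * k + ν + k) * (r.factorial : ℝ) := by
    have := hG r; positivity
  rw [Real.norm_eq_abs, abs_mul, abs_div, abs_pow, abs_neg, abs_of_pos hGf,
    abs_of_pos (rpow_pos_of_pos hx2 _), rpow_split hx2 r (ν/k)]
  have h1 : |c| ^ r ≤ (|c| + 1) ^ r := pow_le_pow_left₀ (abs_nonneg c) (by linarith) r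
  have h2 : (1:ℝ) ≤ 2 * (r:ℝ) + 0 + 1 := by
    have : (0:ℝ) ≤ (r:ℝ) := Nat.cast_nonneg r
    linarith
  calc |c| ^ r / (kGamma k ((r : ℝ) * k + ν + k) * (r.factorial : ℝ)) *
        (((x/2)^2) ^ r * (x/2) ^ (ν/k))
      ≤ (|c|+1) ^ r / (kGamma k ((r : ℝ) * k + ν + k) * (r.factorial : ℝ)) *
        ((2 * (r:ℝ) + 0 + 1) * (((x/2)^2) ^ r * (x/2) ^ (ν/k))) := by
        have h3 : ((x/2)^2) ^ r * (x/2) ^ (ν/k)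
            ≤ (2 * (r:ℝ) + 0 + 1) * (((x/2)^2) ^ r * (x/2) ^ (ν/k)) :=
          le_mul_of_one_le_left (by positivity) h2
        apply mul_le_mul (by gcongr) h3 (by positivity) (by positivity)
      _ = (|c|+1) ^ r / (kGamma k ((r : ℝ) * k + ν + k) * (r.factorial : ℝ)) *
          ((2 * (r:ℝ) + 0 + 1) * ((x/2)^2) ^ r) * ((x/2) ^ (ν/k)) := by ring

lemma hasDerivAt_kBesselW {k ν c x : ℝ} (hk : 0 < k) (hν : 0 < ν) (hx : 0 < x) :
    HasDerivAt (kBesselW k ν c)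
      (1/(2*k) * kBesselW k (ν-k) c x - c/2 * kBesselW k (ν+k) c x) x := by
  have hνk : -k < ν := by linarith
  have hk' : k ≠ 0 := hk.ne'
  set a : ℕ → ℝ := fun r => (-c)^r / (kGamma k (r*k+ν+k) * (r.factorial : ℝ)) with ha
  set g' : ℕ → ℝ → ℝ := fun r t =>
    a r * ((2*(r:ℝ)+ν/k) * (t/2)^(2*(r:ℝ)+ν/k-1) * (1/2)) with hg'def
  have harg : ∀ r : ℕ, 0 < (r : ℝ) * k + ν + k := fun r => by
    have : 0 ≤ (r : ℝ) * k := by positivity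
    linarith
  have hG : ∀ r : ℕ, 0 < kGamma k ((r : ℝ) * k + ν + k) := fun r => kGamma_pos hk (harg r)
  set B : ℝ := |ν/k| with hB
  set A2 : ℝ := (x/4) ^ (ν/k-1) + x ^ (ν/k-1) with hA2
  have hA2pos : 0 < A2 := by
    have : (0:ℝ) < (x/4)^(ν/k-1) := rpow_pos_of_pos (by linarith) _
    have : (0:ℝ) < x^(ν/k-1) := rpow_pos_of_pos hx _
    unfold A2; positivity
  set u : ℕ → ℝ := fun r =>
    (|c|+1)^r / (kGamma k (r*k+ν+k) * (r.factorial : ℝ)) * ((2*(r:ℝ)+B+1) * (x^2)^r)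
      * (A2 * (1/2)) with hu_def
  have hu : Summable u :=
    (summable_master hk hνk (by positivity) (by positivity) (abs_nonneg _)).mul_right _
  have hs : x ∈ Set.Ioo (x/2) (2*x) := ⟨by linarith, by linarith⟩
  have hg : ∀ (r : ℕ) (t : ℝ), t ∈ Set.Ioo (x/2) (2*x) →
      HasDerivAt (fun z => a r * (z/2)^(2*(r:ℝ)+ν/k)) (g' r t) t := by
    intro r t ht
    have ht2 : (0:ℝ) < t/2 := by
      have := ht.1; linarith
    have h1 : HasDerivAt (fun z : ℝ => z/2) (1/2) t := (hasDerivAt_id t).div_const 2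
    have h2 := (Real.hasDerivAt_rpow_const (x := t/2) (p := 2*(r:ℝ)+ν/k)
      (Or.inl ht2.ne')).comp t h1
    exact h2.const_mul (a r)
  have hbound : ∀ (r : ℕ) (t : ℝ), t ∈ Set.Ioo (x/2) (2*x) → ‖g' r t‖ ≤ u r := by
    intro r t ht
    have ht2 : (0:ℝ) < t/2 := by have := ht.1; linarith
    have htx : t/2 ≤ x := by have := ht.2; linarith
    have htx4 : x/4 ≤ t/2 := by have := ht.1; linarith
    have hGf : (0:ℝ) < kGamma k ((r : ℝ) * k + ν + k) * (r.factorial : ℝ) := by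
      have := hG r; positivity
    have hX : (t/2)^(2*(r:ℝ)+ν/k-1) ≤ (x^2)^r * A2 := by
      rw [show 2*(r:ℝ)+ν/k-1 = 2*(r:ℝ)+(ν/k-1) by ring, rpow_split ht2]
      have h2 : ((t/2)^2)^r ≤ (x^2)^r := by
        apply pow_le_pow_left₀ (by positivity)
        nlinarith
      have h3 : (t/2)^(ν/k-1) ≤ A2 := rpow_bound (by linarith : (0:ℝ) < x/4) htx4 htx
      exact mul_le_mul h2 h3 (rpow_pos_of_pos ht2 _).le (by positivity)
    have he : |2*(r:ℝ)+ν/k| ≤ 2*(r:ℝ)+B+1 := by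
      have h0 : (0:ℝ) ≤ (r:ℝ) := Nat.cast_nonneg r
      have := abs_add_le (2*(r:ℝ)) (ν/k)
      rw [abs_of_nonneg (by linarith : (0:ℝ) ≤ 2*(r:ℝ))] at this
      unfold B; linarith
    have hnorm : ‖g' r t‖
        = |c|^r / (kGamma k (r*k+ν+k) * (r.factorial : ℝ)) *
          (|2*(r:ℝ)+ν/k| * (t/2)^(2*(r:ℝ)+ν/k-1) * (1/2)) := by
      unfold g' a
      rw [Real.norm_eq_abs, abs_mul, abs_div, abs_pow, abs_neg, abs_of_pos hGf,
        abs_mul, abs_mul, abs_of_pos (rpow_pos_of_pos ht2 _)]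
      norm_num
    rw [hnorm]
    have hfin : |c|^r / (kGamma k (r*k+ν+k) * (r.factorial : ℝ)) *
          (|2*(r:ℝ)+ν/k| * (t/2)^(2*(r:ℝ)+ν/k-1) * (1/2))
        ≤ (|c|+1)^r / (kGamma k (r*k+ν+k) * (r.factorial : ℝ)) *
          ((2*(r:ℝ)+B+1) * ((x^2)^r * A2) * (1/2)) := by
      apply mul_le_mul
      · gcongr
        linarith [abs_nonneg c]
      · apply mul_le_mul_of_nonneg_right _ (by norm_num)
        exact mul_le_mul he hX (rpow_pos_of_pos ht2 _).le (by positivity)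
      · positivity
      · positivity
    calc _ ≤ _ := hfin
      _ = u r := by unfold u; ring
  have hg0 : Summable (fun r => a r * (x/2)^(2*(r:ℝ)+ν/k)) := summable_term hk hνk hx
  have H := hasDerivAt_tsum_of_isPreconnected hu isOpen_Ioo (convex_Ioo _ _).isPreconnected
    hg hbound hs hg0 hs
  -- now compute the sum of derivatives
  set p : ℕ → ℝ := fun r => 1/(2*k) *
    ((-c)^r / (kGamma k (r*k+(ν-k)+k) * (r.factorial : ℝ)) * (x/2)^(2*(r:ℝ)+(ν-k)/k)) with hp_def
  set q : ℕ → ℝ := fun r =>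
    a r * ((r:ℝ) * (x/2)^(2*(r:ℝ)+ν/k-1) * (1/2)) with hq_def
  have hexp1 : (ν-k)/k = ν/k - 1 := by field_simp
  have hexp2 : (ν+k)/k = ν/k + 1 := by field_simp
  have hpq : ∀ r : ℕ, g' r x = p r + q r := by
    intro r
    have hGr : kGamma k ((r:ℝ)*k+ν+k) = ((r:ℝ)*k+ν) * kGamma k ((r:ℝ)*k+ν) := by
      rw [show (r:ℝ)*k+ν+k = ((r:ℝ)*k+ν)+k by ring]
      exact kGamma_add hk (show (0:ℝ) < (r:ℝ)*k+ν by positivity).ne'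
    have hGr2 : kGamma k ((r:ℝ)*k+(ν-k)+k) = kGamma k ((r:ℝ)*k+ν) := by congr 1; ring
    have hGpos : 0 < kGamma k ((r:ℝ)*k+ν) := kGamma_pos hk (by positivity)
    have hfr : ((r.factorial : ℝ)) ≠ 0 := by positivity
    have hrkν : ((r:ℝ)*k+ν) ≠ 0 := by positivity
    unfold g' p q a
    beta_reduce
    rw [hGr, hGr2, hexp1, show 2*(r:ℝ)+(ν/k-1) = 2*(r:ℝ)+ν/k-1 by ring]
    field_simp
    ring
  have hq_succ : ∀ r : ℕ, q (r+1) = -(c/2) *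
      ((-c)^r / (kGamma k (r*k+(ν+k)+k) * (r.factorial : ℝ)) * (x/2)^(2*(r:ℝ)+(ν+k)/k)) := by
    intro r
    have hGeq : kGamma k ((((r:ℕ)+1):ℝ)*k+ν+k) = kGamma k ((r:ℝ)*k+(ν+k)+k) := by
      ring_nf
    have hGpos : 0 < kGamma k ((r:ℝ)*k+(ν+k)+k) := by
      apply kGamma_pos hk
      have : 0 ≤ (r:ℝ)*k := by positivity
      linarith
    have hfr : ((r.factorial : ℝ)) ≠ 0 := by positivity
    unfold q a
    beta_reduce
    push_cast [Nat.factorial_succ]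
    rw [show ((r:ℝ)+1)*k+ν+k = (r:ℝ)*k+(ν+k)+k by ring, hexp2,
      show 2*((r:ℝ)+1)+ν/k-1 = 2*(r:ℝ)+(ν/k+1) by ring]
    field_simp
    ring
  have hp : Summable p := by
    apply Summable.mul_left
    exact summable_term hk (by linarith) hx
  have hqs : Summable (fun r => q (r+1)) := by
    have : (fun r : ℕ => q (r+1)) = fun r : ℕ => -(c/2) *
        ((-c)^r / (kGamma k (r*k+(ν+k)+k) * (r.factorial : ℝ)) * (x/2)^(2*(r:ℝ)+(ν+k)/k)) :=
      funext hq_succ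
    rw [this]
    exact (summable_term hk (by linarith) hx).mul_left _
  have hq : Summable q := (summable_nat_add_iff 1).mp hqs
  have hq0 : q 0 = 0 := by
    simp only [hq_def, Nat.cast_zero, zero_mul, mul_zero]
  have hsum : ∑' r, g' r x = 1/(2*k) * kBesselW k (ν-k) c x - c/2 * kBesselW k (ν+k) c x := by
    have h1 : ∑' r, g' r x = (∑' r, p r) + ∑' r, q r := by
      rw [← Summable.tsum_add hp hq]
      exact tsum_congr hpq
    rw [h1, Summable.tsum_eq_zero_add hq, hq0]
    have h2 : ∑' r, p r = 1/(2*k) * kBesselW k (ν-k) c x := by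
      unfold p
      rw [tsum_mul_left]
      rfl
    have h3 : ∑' r, q (r+1) = -(c/2) * kBesselW k (ν+k) c x := by
      rw [tsum_congr hq_succ, tsum_mul_left]
      rfl
    rw [h2, h3]
    ring
  rw [hsum] at H
  exact H

lemma pascal_key (c k : ℝ) (hk : k ≠ 0) (m : ℕ) (F : ℕ → ℝ) :
    ∑ n ∈ Finset.range (m+1), (-1:ℝ)^n * (m.choose n : ℝ) * c^n * k^n *
      (1/(2*k) * F n - c/2 * F (n+1))
    = 1/(2*k) * ∑ n ∈ Finset.range (m+2),
        (-1:ℝ)^n * ((m+1).choose n : ℝ) * c^n * k^n * F n := by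
  set g : ℕ → ℝ := fun n => (-1:ℝ)^n * (m.choose n : ℝ) * c^n * k^n * F n with hg
  have claim : ∑ n ∈ Finset.range (m+2), (-1:ℝ)^n * ((m+1).choose n : ℝ) * c^n * k^n * F n
      = ∑ n ∈ Finset.range (m+1), g n
        - c * k * ∑ n ∈ Finset.range (m+1),
            (-1:ℝ)^n * (m.choose n : ℝ) * c^n * k^n * F (n+1) := by
    rw [Finset.sum_range_succ' (fun n => (-1:ℝ)^n * ((m+1).choose n : ℝ) * c^n * k^n * F n)
      (m+1)]
    have split : ∀ n ∈ Finset.range (m+1),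
        (-1:ℝ)^(n+1) * (((m+1).choose (n+1) : ℕ) : ℝ) * c^(n+1) * k^(n+1) * F (n+1)
        = (-1:ℝ)^(n+1) * ((m.choose (n+1) : ℕ) : ℝ) * c^(n+1) * k^(n+1) * F (n+1)
          - c * k * ((-1:ℝ)^n * (m.choose n : ℝ) * c^n * k^n * F (n+1)) := by
      intro n _
      rw [Nat.choose_succ_succ]
      push_cast
      ring
    rw [Finset.sum_congr rfl split, Finset.sum_sub_distrib]
    have e1 : ∑ n ∈ Finset.range (m+1),
        (-1:ℝ)^(n+1) * ((m.choose (n+1) : ℕ) : ℝ) * c^(n+1) * k^(n+1) * F (n+1)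
        = (∑ n ∈ Finset.range (m+1), g n) - g 0 := by
      have h1 := Finset.sum_range_succ' g (m+1)
      have h2 := Finset.sum_range_succ g (m+1)
      have h3 : g (m+1) = 0 := by
        simp [hg, Nat.choose_succ_self]
      have h4 : ∑ n ∈ Finset.range (m+1), g (n+1)
          = ∑ n ∈ Finset.range (m+1),
            (-1:ℝ)^(n+1) * ((m.choose (n+1) : ℕ) : ℝ) * c^(n+1) * k^(n+1) * F (n+1) := by
        apply Finset.sum_congr rfl
        intro n _
        simp [hg]
      rw [← h4]
      linarith
    have e2 : ∑ n ∈ Finset.range (m+1),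
        c * k * ((-1:ℝ)^n * (m.choose n : ℝ) * c^n * k^n * F (n+1))
        = c * k * ∑ n ∈ Finset.range (m+1),
            (-1:ℝ)^n * (m.choose n : ℝ) * c^n * k^n * F (n+1) := by
      rw [Finset.mul_sum]
    have e3 : (-1:ℝ)^(0:ℕ) * (((m+1).choose 0 : ℕ) : ℝ) * c^(0:ℕ) * k^(0:ℕ) * F 0 = g 0 := by
      simp [hg]
    rw [e1, e2, e3]
    ring
  rw [claim, mul_sub]
  simp only [Finset.mul_sum]
  rw [← Finset.sum_sub_distrib]
  apply Finset.sum_congr rfl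
  intro n _
  simp only [hg]
  field_simp


lemma kBessel_iteratedDeriv_aux (k c : ℝ) (hk : 0 < k) :
    ∀ (m : ℕ) (ν : ℝ), ((m:ℝ)-1)*k < ν → ∀ x : ℝ, 0 < x →
      iteratedDeriv m (kBesselW k ν c) x =
        1 / (2^m * k^m) * ∑ n ∈ Finset.range (m+1),
          (-1:ℝ)^n * (m.choose n : ℝ) * c^n * k^n *
            kBesselW k (ν - m*k + 2*n*k) c x := by
  intro m
  induction m with
  | zero =>
    intro ν hν x hx
    simp
  | succ m IH =>
    intro ν hν x hx
    have hmk : (m:ℝ)*k < ν := by push_cast at hν; linarith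
    have hpos : ∀ n : ℕ, 0 < ν - m*k + 2*n*k := fun n => by
      have : (0:ℝ) ≤ 2*(n:ℝ)*k := by positivity
      linarith
    set F : ℝ → ℝ := fun y => 1 / (2^m * k^m) * ∑ n ∈ Finset.range (m+1),
      (-1:ℝ)^n * (m.choose n : ℝ) * c^n * k^n *
        kBesselW k (ν - m*k + 2*n*k) c y with hF
    have hEq : iteratedDeriv m (kBesselW k ν c) =ᶠ[nhds x] F := by
      filter_upwards [isOpen_Ioi.mem_nhds hx] with y hy
      exact IH ν (by nlinarith) y hy
    have hd : HasDerivAt F (1 / (2^m*k^m) * ∑ n ∈ Finset.range (m+1),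
        (-1:ℝ)^n * (m.choose n : ℝ) * c^n * k^n *
          (1/(2*k) * kBesselW k (ν - m*k + 2*n*k - k) c x
            - c/2 * kBesselW k (ν - m*k + 2*n*k + k) c x)) x := by
      apply HasDerivAt.const_mul
      apply HasDerivAt.fun_sum
      intro n _
      exact (hasDerivAt_kBesselW hk (hpos n) hx).const_mul _
    rw [iteratedDeriv_succ, hEq.deriv_eq, hd.deriv]
    have harg1 : ∀ n : ℕ, ν - m*k + 2*(n:ℝ)*k - k = ν - ((m:ℝ)+1)*k + 2*(n:ℝ)*k :=
      fun n => by ring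
    have harg2 : ∀ n : ℕ, ν - m*k + 2*(n:ℝ)*k + k = ν - ((m:ℝ)+1)*k + 2*((n:ℝ)+1)*k :=
      fun n => by ring
    set G : ℕ → ℝ := fun n => kBesselW k (ν - ((m:ℝ)+1)*k + 2*(n:ℝ)*k) c x with hG
    have hre : ∑ n ∈ Finset.range (m+1), (-1:ℝ)^n * (m.choose n : ℝ) * c^n * k^n *
          (1/(2*k) * kBesselW k (ν - m*k + 2*n*k - k) c x
            - c/2 * kBesselW k (ν - m*k + 2*n*k + k) c x)
        = ∑ n ∈ Finset.range (m+1), (-1:ℝ)^n * (m.choose n : ℝ) * c^n * k^n *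
          (1/(2*k) * G n - c/2 * G (n+1)) := by
      apply Finset.sum_congr rfl
      intro n _
      simp only [hG]
      push_cast
      rw [harg1 n, harg2 n]
    rw [hre, pascal_key c k hk.ne' m G]
    simp only [hG]
    push_cast
    rw [show m+1+1 = m+2 from rfl, ← mul_assoc]
    congr 1
    rw [pow_succ, pow_succ]
    have h2 : (2:ℝ)^m ≠ 0 := by positivity
    have hkm : k^m ≠ 0 := by positivity
    field_simp

theorem kBessel_iteratedDeriv (k ν c : ℝ) (hk : 0 < k) (m : ℕ) (hm : 0 < m)
    (hν : ((m : ℝ) - 1) * k < ν) (x : ℝ) (hx : 0 < x) :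
    iteratedDeriv m (kBesselW k ν c) x =
      1 / (2 ^ m * k ^ m) * ∑ n ∈ Finset.range (m + 1),
        (-1 : ℝ) ^ n * (m.choose n : ℝ) * c ^ n * k ^ n *
          kBesselW k (ν - m * k + 2 * n * k) c x :=
  kBessel_iteratedDeriv_aux k c hk m ν hν x hx
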